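/- Let μ₀ > 0, τ > 0 and C₀ ∈ ℝ, and let C_RE : [0, ∞) → ℝ be differentiable with C_RE′(t) = μ₀·e^{−t/τ}·(C₀ − C_RE(t)) and C_RE(0) = 0. Then for every t ≥ 0, C_RE(t) = C₀·(1 − exp(−μ₀τ·(1 − e^{−t/τ}))), and as t → ∞ the cellular drug uptake tends to C₀·(1 − e^{−μ₀τ}), which is strictly less than C₀ whenever C₀ > 0. -/

import Mathlib

/-- With a constant extracellular concentration C₀ and resealing
MTC μ₀·e^{−t/τ}, the intracellular uptake obeys
C_RE(t) = C₀·(1 − exp(−μ₀τ·(1 − e^{−t/τ}))), tends to C₀·(1 − e^{−μ₀τ}) as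
t → ∞, and this limit is strictly less than C₀ whenever C₀ > 0. -/
theorem constant_source_uptake_formula
    (μ₀ τ C₀ : ℝ) (hμ₀ : 0 < μ₀) (hτ : 0 < τ)
    (CRE : ℝ → ℝ)
    (hCRE : ∀ t ∈ Set.Ici (0 : ℝ),
      HasDerivAt CRE (μ₀ * Real.exp (-t / τ) * (C₀ - CRE t)) t)
    (h0 : CRE 0 = 0) :
    (∀ t ∈ Set.Ici (0 : ℝ),
      CRE t = C₀ * (1 - Real.exp (-(μ₀ * τ) * (1 - Real.exp (-t / τ))))) ∧
    Filter.Tendsto CRE Filter.atTop (nhds (C₀ * (1 - Real.exp (-(μ₀ * τ))))) ∧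
    (0 < C₀ → C₀ * (1 - Real.exp (-(μ₀ * τ))) < C₀) := by
  set φ : ℝ → ℝ := fun t => μ₀ * τ * (1 - Real.exp (-t / τ)) with hφ
  have hφd : ∀ t : ℝ, HasDerivAt φ (μ₀ * Real.exp (-t / τ)) t := by
    intro t
    have he : HasDerivAt (fun t : ℝ => Real.exp (-t / τ)) (Real.exp (-t/τ) * (-1/τ)) t := by
      have : HasDerivAt (fun t : ℝ => -t / τ) (-1/τ) t := by
        simpa using ((hasDerivAt_id t).neg.div_const τ)
      exact this.exp
    have : HasDerivAt (fun y => (μ₀ * τ) * (1 - Real.exp (-y / τ))) _ t := ((hasDerivAt_const t (1:ℝ)).sub he).const_mul (μ₀ * τ)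
    convert this using 1
    field_simp
    ring
  set g : ℝ → ℝ := fun t => (C₀ - CRE t) * Real.exp (φ t) with hg
  have key : ∀ t ∈ Set.Ici (0:ℝ), CRE t = C₀ * (1 - Real.exp (-(μ₀ * τ) * (1 - Real.exp (-t / τ)))) := by
    intro t ht
    have hgd : ∀ x ∈ Set.Ici (0:ℝ), HasDerivAt g 0 x := by
      intro x hx
      have h1 := hCRE x hx
      have h2 := (hφd x).exp
      have : HasDerivAt (fun y => (C₀ - CRE y) * Real.exp (φ y)) _ x := (((hasDerivAt_const x C₀).sub h1).mul h2)
      convert this using 1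
      simp only [Pi.sub_apply]
      ring
    have hc : ContinuousOn g (Set.Icc 0 t) := fun x hx =>
      (hgd x hx.1).continuousAt.continuousWithinAt
    have hconst : g t = g 0 := by
      have := constant_of_has_deriv_right_zero hc (fun x hx =>
        (hgd x hx.1).hasDerivWithinAt) t (Set.mem_Icc.mpr ⟨ht, le_refl t⟩)
      exact this
    have hg0 : g 0 = C₀ := by
      simp [hg, h0, hφ]
    have : (C₀ - CRE t) * Real.exp (φ t) = C₀ := hconst.trans hg0
    have hexp : Real.exp (φ t) ≠ 0 := Real.exp_ne_zero _
    have hCt : C₀ - CRE t = C₀ * Real.exp (-(φ t)) := by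
      rw [Real.exp_neg]
      field_simp at this ⊢
      linarith [this]
    have : CRE t = C₀ - C₀ * Real.exp (-(φ t)) := by linarith
    rw [this, hφ]
    ring_nf
  refine ⟨key, ?_, ?_⟩
  · have hlim : Filter.Tendsto (fun t => C₀ * (1 - Real.exp (-(μ₀ * τ) * (1 - Real.exp (-t / τ))))) Filter.atTop (nhds (C₀ * (1 - Real.exp (-(μ₀ * τ))))) := by
      have h1 : Filter.Tendsto (fun t : ℝ => -t / τ) Filter.atTop Filter.atBot := by
        apply Filter.Tendsto.atBot_div_const hτ
        exact Filter.tendsto_neg_atTop_atBot.comp Filter.tendsto_id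
      have h2 : Filter.Tendsto (fun t : ℝ => Real.exp (-t / τ)) Filter.atTop (nhds 0) :=
        Real.tendsto_exp_atBot.comp h1
      have h3 : Filter.Tendsto (fun t : ℝ => -(μ₀ * τ) * (1 - Real.exp (-t / τ))) Filter.atTop (nhds (-(μ₀ * τ) * (1 - 0))) :=
        ((tendsto_const_nhds.sub h2)).const_mul _
      have h4 := (Real.continuous_exp.tendsto _).comp h3
      have h5 := h4.const_mul C₀
      simp only [sub_zero, mul_one] at h5
      convert ((tendsto_const_nhds (x := (1:ℝ))).sub h4).const_mul C₀ using 2 <;> simp [mul_sub]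
    refine hlim.congr' ?_
    filter_upwards [Filter.eventually_ge_atTop (0:ℝ)] with t ht
    exact (key t ht).symm
  · intro hC
    have := Real.exp_pos (-(μ₀ * τ))
    nlinarith
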